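/- In a real Banach space X, the Kuratowski measure of noncompactness of the convex hull of a bounded set equals that of the set: α(co(B)) = α(B) for all bounded B ⊆ X. -/

import Mathlib

/-- The Kuratowski measure of noncompactness: the infimum of all `d > 0` such that `B`
can be covered by finitely many sets of diameter at most `d`. -/
noncomputable def kuratowski {M : Type*} [PseudoMetricSpace M] (B : Set M) : ℝ :=
  sInf {d : ℝ | 0 < d ∧ ∃ F : Finset (Set M),
    (B ⊆ ⋃ E ∈ F, E) ∧ ∀ E ∈ F, EMetric.diam E ≤ ENNReal.ofReal d}

section Aux

variable {X : Type*} [NormedAddCommGroup X] [NormedSpace ℝ X]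

open Finset in
/-- Grouping lemma: every point of the convex hull of `B` is a convex combination of points
of the convex hulls of the members of a finite cover of `B` by nonempty sets. -/
lemma kuratowski_grouping (F : Finset (Set X)) (B : Set X)
    (hcov : B ⊆ ⋃ E ∈ F, E) (hmem : ∀ E ∈ F, (E : Set X).Nonempty)
    {x : X} (hx : x ∈ convexHull ℝ B) :
    ∃ lam : {E // E ∈ F} → ℝ, ∃ y : {E // E ∈ F} → X,
      (∀ i, 0 ≤ lam i) ∧ (∑ i, lam i = 1) ∧
      (∀ i, y i ∈ convexHull ℝ i.1) ∧ ∑ i, lam i • y i = x := by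
  classical
  rw [mem_convexHull_iff_exists_fintype] at hx
  obtain ⟨ι', _, w, z, hw0, hw1, hz, hxz⟩ := hx
  have hc : ∀ j : ι', ∃ i : {E // E ∈ F}, z j ∈ i.1 := by
    intro j
    have h := hcov (hz j)
    simp only [Set.mem_iUnion] at h
    obtain ⟨E, hE, hzE⟩ := h
    exact ⟨⟨E, hE⟩, hzE⟩
  choose c hcz using hc
  set lam : {E // E ∈ F} → ℝ := fun i => ∑ j ∈ Finset.univ.filter (fun j => c j = i), w j
    with hlam_def
  set S : {E // E ∈ F} → X := fun i => ∑ j ∈ Finset.univ.filter (fun j => c j = i), w j • z j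
    with hS_def
  have hlam0 : ∀ i, 0 ≤ lam i := fun i => Finset.sum_nonneg fun j _ => hw0 j
  set y : {E // E ∈ F} → X := fun i =>
    if h : lam i = 0 then (hmem i i.2).choose else (lam i)⁻¹ • S i with hy_def
  refine ⟨lam, y, hlam0, ?_, ?_, ?_⟩
  · rw [hlam_def, ← hw1]
    exact Finset.sum_fiberwise _ _ _
  · intro i
    by_cases h : lam i = 0
    · have : y i = (hmem i i.2).choose := by simp [hy_def, h]
      rw [this]
      exact subset_convexHull ℝ _ (hmem i i.2).choose_spec
    · have hyi : y i = (lam i)⁻¹ • S i := by simp [hy_def, h]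
      rw [hyi]
      have hpos : 0 < lam i := lt_of_le_of_ne (hlam0 i) (Ne.symm h)
      have := Finset.centerMass_mem_convexHull
        (t := Finset.univ.filter (fun j => c j = i)) (w := w) (z := z)
        (fun j _ => hw0 j) hpos (fun j hj => by
          have hji : c j = i := (Finset.mem_filter.1 hj).2
          have := hcz j
          rwa [hji] at this)
      rw [Finset.centerMass] at this
      exact this
  · have key : ∀ i, lam i • y i = S i := by
      intro i
      by_cases h : lam i = 0
      · have hw_all : ∀ j ∈ Finset.univ.filter (fun j => c j = i), w j = 0 := by
          have := (Finset.sum_eq_zero_iff_of_nonneg (fun j _ => hw0 j)).1 h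
          exact this
        have hS0 : S i = 0 := Finset.sum_eq_zero fun j hj => by rw [hw_all j hj, zero_smul]
        simp [h, hS0]
      · have hyi : y i = (lam i)⁻¹ • S i := by simp [hy_def, h]
        rw [hyi, smul_inv_smul₀ h]
    calc ∑ i, lam i • y i = ∑ i, S i := by simp only [key]
      _ = ∑ j, w j • z j := Finset.sum_fiberwise _ _ _
      _ = x := hxz

/-- Given a finite `d`-cover of `B`, the convex hull admits a finite `(d+ε)`-cover. -/
lemma kuratowski_step (B : Set X) (hB : Bornology.IsBounded B) {d ε : ℝ} (hd : 0 < d)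
    (hε : 0 < ε)
    (h : ∃ F : Finset (Set X), (B ⊆ ⋃ E ∈ F, E) ∧
      ∀ E ∈ F, EMetric.diam E ≤ ENNReal.ofReal d) :
    ∃ F : Finset (Set X), ((convexHull ℝ B) ⊆ ⋃ E ∈ F, E) ∧
      ∀ E ∈ F, EMetric.diam E ≤ ENNReal.ofReal (d + ε) := by
  classical
  obtain ⟨F0, hcov0, hdiam0⟩ := h
  set F : Finset (Set X) := (F0.image (· ∩ B)).filter (fun E => E.Nonempty) with hF_def
  have hFprop : ∀ E ∈ F, E ⊆ B ∧ E.Nonempty ∧ EMetric.diam E ≤ ENNReal.ofReal d := by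
    intro E hE
    rw [hF_def, Finset.mem_filter, Finset.mem_image] at hE
    obtain ⟨⟨E0, hE0, rfl⟩, hne⟩ := hE
    exact ⟨Set.inter_subset_right, hne,
      le_trans (EMetric.diam_mono Set.inter_subset_left) (hdiam0 E0 hE0)⟩
  have hcov : B ⊆ ⋃ E ∈ F, E := by
    intro x hxB
    have h := hcov0 hxB
    simp only [Set.mem_iUnion] at h ⊢
    obtain ⟨E0, hE0, hxE0⟩ := h
    refine ⟨E0 ∩ B, ?_, hxE0, hxB⟩
    rw [hF_def, Finset.mem_filter, Finset.mem_image]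
    exact ⟨⟨E0, hE0, rfl⟩, ⟨x, hxE0, hxB⟩⟩
  obtain ⟨R₀, hR₀⟩ := isBounded_iff_forall_norm_le.1 (isBounded_convexHull.2 hB)
  set R : ℝ := max R₀ 0 with hR_def
  have hR0 : 0 ≤ R := le_max_right _ _
  have hR : ∀ x ∈ convexHull ℝ B, ‖x‖ ≤ R := fun x hx => (hR₀ x hx).trans (le_max_left _ _)
  set ι := {E // E ∈ F}
  set n : ℝ := (Fintype.card ι : ℝ) with hn_def
  have hn0 : 0 ≤ n := Nat.cast_nonneg _
  set r : ℝ := ε / 2 with hr_def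
  have hr0 : 0 < r := half_pos hε
  set δ : ℝ := r / (n * R + 1) with hδ_def
  have hδ : 0 < δ := div_pos hr0 (by positivity)
  set C : (ι → ℝ) → Set X := fun μ =>
    (fun y : ι → X => ∑ i, μ i • y i) '' {y | ∀ i, y i ∈ convexHull ℝ i.1} with hC_def
  have hdiamC : ∀ μ ∈ stdSimplex ℝ ι, EMetric.diam (C μ) ≤ ENNReal.ofReal d := by
    intro μ hμ
    apply EMetric.diam_le
    rintro a ⟨y, hy, rfl⟩ b ⟨y', hy', rfl⟩
    rw [edist_le_ofReal hd.le]
    have hdist : ∀ i : ι, dist (y i) (y' i) ≤ d := by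
      intro i
      have h1 : EMetric.diam (convexHull ℝ i.1) ≤ ENNReal.ofReal d := by
        exact (le_of_eq (convexHull_ediam (i.1 : Set X))).trans (hFprop i i.2).2.2
      have h2 : edist (y i) (y' i) ≤ ENNReal.ofReal d :=
        le_trans (EMetric.edist_le_diam_of_mem (hy i) (hy' i)) h1
      rwa [edist_le_ofReal hd.le] at h2
    calc dist (∑ i, μ i • y i) (∑ i, μ i • y' i)
        = ‖∑ i, (μ i • y i - μ i • y' i)‖ := by rw [dist_eq_norm, Finset.sum_sub_distrib]
      _ ≤ ∑ i, ‖μ i • y i - μ i • y' i‖ := norm_sum_le Finset.univ fun i => μ i • y i - μ i • y' i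
      _ ≤ ∑ i, μ i * d := by
          apply Finset.sum_le_sum
          intro i _
          rw [← smul_sub, norm_smul, Real.norm_eq_abs, abs_of_nonneg (hμ.1 i)]
          have hni : ‖y i - y' i‖ ≤ d := by rw [← dist_eq_norm]; exact hdist i
          exact mul_le_mul_of_nonneg_left hni (hμ.1 i)
      _ = d := by rw [← Finset.sum_mul, hμ.2, one_mul]
  obtain ⟨t, ht_mem, ht_cov⟩ := (isCompact_stdSimplex ℝ ι).elim_nhds_subcover
    (fun μ => Metric.ball μ δ) (fun μ _ => Metric.ball_mem_nhds μ hδ)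
  refine ⟨t.image (fun μ => Metric.cthickening r (C μ)), ?_, ?_⟩
  · intro x hx
    obtain ⟨lam, y, h0, h1, hy, hxy⟩ :=
      kuratowski_grouping F B hcov (fun E hE => (hFprop E hE).2.1) hx
    have hlam_sp : lam ∈ stdSimplex ℝ ι := ⟨h0, h1⟩
    have h := ht_cov hlam_sp
    simp only [Set.mem_iUnion] at h
    obtain ⟨μ, hμt, hμball⟩ := h
    have hμ_sp : μ ∈ stdSimplex ℝ ι := ht_mem μ hμt
    have hyR : ∀ i : ι, ‖y i‖ ≤ R := fun i =>
      hR _ (convexHull_mono (hFprop i i.2).1 (hy i))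
    have hdist : dist x (∑ i, μ i • y i) ≤ r := by
      have hcoord : ∀ i : ι, |lam i - μ i| ≤ δ := by
        intro i
        have := dist_le_pi_dist lam μ i
        rw [Real.dist_eq] at this
        exact this.trans (le_of_lt (Metric.mem_ball.1 hμball))
      have hδR : δ * (n * R + 1) = r := div_mul_cancel₀ _ (by positivity)
      calc dist x (∑ i, μ i • y i)
          = ‖∑ i, (lam i • y i - μ i • y i)‖ := by
            rw [dist_eq_norm, ← hxy, Finset.sum_sub_distrib]
        _ ≤ ∑ i, ‖lam i • y i - μ i • y i‖ := norm_sum_le Finset.univ fun i => lam i • y i - μ i • y i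
        _ ≤ ∑ _i : ι, δ * R := by
            apply Finset.sum_le_sum
            intro i _
            rw [← sub_smul, norm_smul, Real.norm_eq_abs]
            exact mul_le_mul (hcoord i) (hyR i) (norm_nonneg _) hδ.le
        _ = n * (δ * R) := by rw [Finset.sum_const, Finset.card_univ, nsmul_eq_mul, hn_def]
        _ ≤ r := by nlinarith [hδ.le, hR0, hn0]
    have hxC : x ∈ Metric.cthickening r (C μ) :=
      Metric.mem_cthickening_of_dist_le x (∑ i, μ i • y i) r _ ⟨y, hy, rfl⟩ hdist
    simp only [Set.mem_iUnion]
    exact ⟨_, Finset.mem_image_of_mem _ hμt, hxC⟩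
  · intro E hE
    obtain ⟨μ, hμt, rfl⟩ := Finset.mem_image.1 hE
    have h1 : EMetric.diam (Metric.cthickening r (C μ)) ≤
        EMetric.diam (C μ) + 2 * (Real.toNNReal r : ENNReal) := by
      have := Metric.ediam_cthickening_le (s := C μ) (Real.toNNReal r)
      rwa [Real.coe_toNNReal r hr0.le] at this
    refine h1.trans ?_
    have h2 : (Real.toNNReal r : ENNReal) = ENNReal.ofReal r := by
      simp [ENNReal.ofReal]
    rw [h2]
    have h3 : ENNReal.ofReal (d + ε) = ENNReal.ofReal d + 2 * ENNReal.ofReal r := by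
      rw [two_mul, ← ENNReal.ofReal_add hr0.le hr0.le, hr_def, add_halves,
        ← ENNReal.ofReal_add hd.le hε.le]
    rw [h3]
    exact add_le_add_left (hdiamC μ (ht_mem μ hμt)) _

end Aux

/-- Invariance of the Kuratowski measure under convex hulls in a Banach space. -/
theorem stmt9 {X : Type*} [NormedAddCommGroup X] [NormedSpace ℝ X] [CompleteSpace X]
    (B : Set X) (hB : Bornology.IsBounded B) :
    kuratowski (convexHull ℝ B) = kuratowski B := by
  classical
  set A : Set ℝ := {d : ℝ | 0 < d ∧ ∃ F : Finset (Set X),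
    (B ⊆ ⋃ E ∈ F, E) ∧ ∀ E ∈ F, EMetric.diam E ≤ ENNReal.ofReal d} with hA_def
  set A' : Set ℝ := {d : ℝ | 0 < d ∧ ∃ F : Finset (Set X),
    ((convexHull ℝ B) ⊆ ⋃ E ∈ F, E) ∧ ∀ E ∈ F, EMetric.diam E ≤ ENNReal.ofReal d} with hA'_def
  have hbdd : BddBelow A := ⟨0, fun d hd => hd.1.le⟩
  have hbdd' : BddBelow A' := ⟨0, fun d hd => hd.1.le⟩
  have hne_gen : ∀ (S : Set X), Bornology.IsBounded S → ∃ d : ℝ, 0 < d ∧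
      ∃ F : Finset (Set X), (S ⊆ ⋃ E ∈ F, E) ∧
      ∀ E ∈ F, EMetric.diam E ≤ ENNReal.ofReal d := by
    intro S hS
    refine ⟨(EMetric.diam S).toReal + 1, by positivity, {S}, ?_, ?_⟩
    · intro x hx; simp only [Set.mem_iUnion]; exact ⟨S, Finset.mem_singleton_self S, hx⟩
    · intro E hE
      rw [Finset.mem_singleton] at hE
      subst hE
      have hfin : EMetric.diam E ≠ ⊤ := hS.ediam_ne_top
      rw [ENNReal.ofReal_add ENNReal.toReal_nonneg zero_le_one,
        ENNReal.ofReal_toReal hfin]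
      exact le_add_of_nonneg_right (by simp)
  have hAne : A.Nonempty := hne_gen B hB
  have hA'ne : A'.Nonempty := hne_gen (convexHull ℝ B) (isBounded_convexHull.2 hB)
  apply le_antisymm
  · -- kuratowski (co B) ≤ kuratowski B
    apply le_csInf hAne
    intro d hd
    apply le_of_forall_pos_le_add
    intro ε hε
    apply csInf_le hbdd'
    exact ⟨by linarith [hd.1], kuratowski_step B hB hd.1 hε hd.2⟩
  · -- kuratowski B ≤ kuratowski (co B)
    apply csInf_le_csInf hbdd hA'ne
    intro d hd
    exact ⟨hd.1, hd.2.imp fun F hF =>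
      ⟨(subset_convexHull ℝ B).trans hF.1, hF.2⟩⟩
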